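/- For every ω ∈ ℝ³ with ω ≠ 0 and every u ∈ ℝ³, let S be the 4×4 real matrix whose upper-left 3×3 block is the skew-symmetric matrix (ω)ₓ (defined by (ω)ₓ v = ω × v for all v ∈ ℝ³), whose fourth column has top 3×1 block u, and whose last row is zero. Then the matrix exponential of S equals I₄ + S + ((1 − cos ‖ω‖)/‖ω‖²) S² + ((‖ω‖ − sin ‖ω‖)/‖ω‖³) S³, where ‖ω‖ is the Euclidean norm of ω. (Closed form of the Lie group exponential of SE(3), used by the 3D IEKF-SLAM.) -/

import Mathlib

open Matrix Real

/-- The skew-symmetric cross-product matrix `(ω)ₓ` of `ω ∈ ℝ³`, characterized by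
`(ω)ₓ v = ω × v` for all `v`. -/
def skew (ω : Fin 3 → ℝ) : Matrix (Fin 3) (Fin 3) ℝ :=
  !![0, -ω 2, ω 1;
     ω 2, 0, -ω 0;
     -ω 1, ω 0, 0]

/-- The 4×4 matrix of `se(3)` with rotational part `(ω)ₓ` and translational part `u`. -/
def se3mat (ω u : Fin 3 → ℝ) : Matrix (Fin 4) (Fin 4) ℝ :=
  !![0, -ω 2, ω 1, u 0;
     ω 2, 0, -ω 0, u 1;
     -ω 1, ω 0, 0, u 2;
     0, 0, 0, 0]

/-- The Euclidean norm of a vector of `ℝ³`. -/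
noncomputable def enorm3 (ω : Fin 3 → ℝ) : ℝ := ‖(WithLp.equiv 2 (Fin 3 → ℝ)).symm ω‖

lemma enorm3_sq (ω : Fin 3 → ℝ) : enorm3 ω ^ 2 = ω 0 ^ 2 + ω 1 ^ 2 + ω 2 ^ 2 := by
  rw [enorm3, EuclideanSpace.norm_eq, Real.sq_sqrt (by positivity)]
  simp [Fin.sum_univ_three, PiLp.toLp_apply, sq]

lemma enorm3_ne (ω : Fin 3 → ℝ) (hω : ω ≠ 0) : enorm3 ω ≠ 0 := by
  simp only [enorm3, ne_eq, norm_eq_zero]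
  intro h
  exact hω (by simpa using congrArg (WithLp.equiv 2 (Fin 3 → ℝ)) h)

lemma se3mat_pow_four (ω u : Fin 3 → ℝ) {θ : ℝ} (hθ2 : θ ^ 2 = ω 0 ^ 2 + ω 1 ^ 2 + ω 2 ^ 2) :
    se3mat ω u ^ 4 = (-θ ^ 2) • se3mat ω u ^ 2 := by
  have h4 : se3mat ω u ^ 4 = (se3mat ω u ^ 2) * (se3mat ω u ^ 2) := by
    rw [← pow_add]
  have hm : se3mat ω u ^ 2 =
      !![-(ω 2)^2 - (ω 1)^2, ω 0 * ω 1, ω 0 * ω 2, ω 1 * u 2 - ω 2 * u 1;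
         ω 0 * ω 1, -(ω 2)^2 - (ω 0)^2, ω 1 * ω 2, ω 2 * u 0 - ω 0 * u 2;
         ω 0 * ω 2, ω 1 * ω 2, -(ω 1)^2 - (ω 0)^2, ω 0 * u 1 - ω 1 * u 0;
         0, 0, 0, 0] := by
    rw [sq]
    ext i j
    fin_cases i <;> fin_cases j <;>
      simp [se3mat, Matrix.mul_apply, Fin.sum_univ_four, Matrix.vecHead, Matrix.vecTail] <;> ring
  rw [h4, hm]
  ext i j
  fin_cases i <;> fin_cases j <;>
    simp [Matrix.mul_apply, Fin.sum_univ_four, Matrix.vecHead, Matrix.vecTail, hθ2] <;> ring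

lemma hasSum_cos_aux (θ : ℝ) (hθ : θ ≠ 0) :
    HasSum (fun n : ℕ => ((Nat.factorial (2*n+2) : ℝ))⁻¹ * (-θ^2)^n)
      ((1 - Real.cos θ)/θ^2) := by
  have h := Real.hasSum_cos θ
  have h1 : HasSum (fun n : ℕ => (-1:ℝ)^(n+1) * θ^(2*(n+1)) / Nat.factorial (2*(n+1)))
      (Real.cos θ - 1) := by
    have := (hasSum_nat_add_iff'
      (f := fun n : ℕ => (-1:ℝ)^n * θ^(2*n) / Nat.factorial (2*n)) 1).2 h
    simpa using this
  have h3 := h1.mul_left (-(θ^2)⁻¹)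
  have hfun : (fun n : ℕ => (-(θ^2)⁻¹) * ((-1:ℝ)^(n+1) * θ^(2*(n+1)) / Nat.factorial (2*(n+1))))
      = fun n : ℕ => ((Nat.factorial (2*n+2) : ℝ))⁻¹ * (-θ^2)^n := by
    funext n
    have h2 : 2*(n+1) = 2*n+2 := by ring
    have hneg : (-θ^2 : ℝ)^n = (-1)^n * θ^(2*n) := by rw [neg_pow, pow_mul]
    rw [h2, hneg]
    field_simp
    ring
  have hval : (-(θ^2)⁻¹) * (Real.cos θ - 1) = (1 - Real.cos θ)/θ^2 := by
    field_simp
    ring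
  rw [hfun, hval] at h3
  exact h3

lemma hasSum_sin_aux (θ : ℝ) (hθ : θ ≠ 0) :
    HasSum (fun n : ℕ => ((Nat.factorial (2*n+3) : ℝ))⁻¹ * (-θ^2)^n)
      ((θ - Real.sin θ)/θ^3) := by
  have h := Real.hasSum_sin θ
  have h1 : HasSum (fun n : ℕ => (-1:ℝ)^(n+1) * θ^(2*(n+1)+1) / Nat.factorial (2*(n+1)+1))
      (Real.sin θ - θ) := by
    have := (hasSum_nat_add_iff'
      (f := fun n : ℕ => (-1:ℝ)^n * θ^(2*n+1) / Nat.factorial (2*n+1)) 1).2 h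
    simpa using this
  have h3 := h1.mul_left (-(θ^3)⁻¹)
  have hfun : (fun n : ℕ =>
        (-(θ^3)⁻¹) * ((-1:ℝ)^(n+1) * θ^(2*(n+1)+1) / Nat.factorial (2*(n+1)+1)))
      = fun n : ℕ => ((Nat.factorial (2*n+3) : ℝ))⁻¹ * (-θ^2)^n := by
    funext n
    have h2 : 2*(n+1)+1 = 2*n+3 := by ring
    have hneg : (-θ^2 : ℝ)^n = (-1)^n * θ^(2*n) := by rw [neg_pow, pow_mul]
    rw [h2, hneg]
    field_simp
    ring
  have hval : (-(θ^3)⁻¹) * (Real.sin θ - θ) = (θ - Real.sin θ)/θ^3 := by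
    field_simp
    ring
  rw [hfun, hval] at h3
  exact h3

/-- Closed form of the Lie group exponential of `SE(3)`: for `ω ≠ 0`,
`exp S = I + S + ((1 − cos‖ω‖)/‖ω‖²) S² + ((‖ω‖ − sin‖ω‖)/‖ω‖³) S³`, where `S` is the 4×4
matrix with upper-left block `(ω)ₓ`, fourth column topped by `u`, and last row zero.
(The matrix `skew ω` satisfies `(skew ω).mulVec v = ω × v` for every `v`.) -/
theorem statement19 (ω u : Fin 3 → ℝ) (hω : ω ≠ 0) :
    NormedSpace.exp (se3mat ω u) =
      1 + se3mat ω u + ((1 - Real.cos (enorm3 ω)) / (enorm3 ω) ^ 2) • (se3mat ω u) ^ 2 +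
        ((enorm3 ω - Real.sin (enorm3 ω)) / (enorm3 ω) ^ 3) • (se3mat ω u) ^ 3 := by
  set θ := enorm3 ω with hθdef
  set S := se3mat ω u with hSdef
  have hθne : θ ≠ 0 := enorm3_ne ω hω
  have hS4 : S ^ 4 = (-θ ^ 2) • S ^ 2 := se3mat_pow_four ω u (enorm3_sq ω)
  have hS5 : S ^ 5 = (-θ ^ 2) • S ^ 3 := by
    have h1 : S ^ 5 = S ^ 4 * S := by rw [← pow_succ]
    rw [h1, hS4, smul_mul_assoc, ← pow_succ]
  have key : ∀ k : ℕ, S ^ (2*k+2) = ((-θ^2)^k) • S^2 ∧ S ^ (2*k+3) = ((-θ^2)^k) • S^3 := by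
    intro k
    induction k with
    | zero => simp
    | succ n ih =>
      obtain ⟨ih1, ih2⟩ := ih
      have e1 : 2*(n+1)+2 = (2*n+2)+2 := by ring
      have e2 : 2*(n+1)+3 = (2*n+3)+2 := by ring
      constructor
      · rw [e1, pow_add, ih1, smul_mul_assoc, ← pow_add]
        norm_num
        rw [hS4, smul_smul, ← pow_succ]
      · rw [e2, pow_add, ih2, smul_mul_assoc, ← pow_add]
        norm_num
        rw [hS5, smul_smul, ← pow_succ]
  -- the even part
  have he : HasSum (fun k : ℕ => ((Nat.factorial (2*k+2) : ℝ))⁻¹ • S ^ (2*k+2))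
      (((1 - Real.cos θ)/θ^2) • S^2) := by
    have h := (hasSum_cos_aux θ hθne).smul_const (S^2)
    convert h using 2 with k
    rw [(key k).1, smul_smul]
  have ho : HasSum (fun k : ℕ => ((Nat.factorial (2*k+3) : ℝ))⁻¹ • S ^ (2*k+3))
      (((θ - Real.sin θ)/θ^3) • S^3) := by
    have h := (hasSum_sin_aux θ hθne).smul_const (S^3)
    convert h using 2 with k
    rw [(key k).2, smul_smul]
  have ho' : HasSum (fun k : ℕ => ((Nat.factorial (2*k+1+2) : ℝ))⁻¹ • S ^ (2*k+1+2))
      (((θ - Real.sin θ)/θ^3) • S^3) := by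
    simpa [show ∀ k : ℕ, 2*k+1+2 = 2*k+3 from fun k => by ring] using ho
  have hcomb : HasSum (fun n : ℕ => ((Nat.factorial (n+2) : ℝ))⁻¹ • S ^ (n+2))
      (((1 - Real.cos θ)/θ^2) • S^2 + ((θ - Real.sin θ)/θ^3) • S^3) :=
    HasSum.even_add_odd he ho'
  have hfinal : HasSum (fun n : ℕ => ((Nat.factorial n : ℝ))⁻¹ • S ^ n)
      (1 + S + ((1 - Real.cos θ)/θ^2) • S^2 + ((θ - Real.sin θ)/θ^3) • S^3) := by
    refine (hasSum_nat_add_iff' (f := fun n : ℕ => ((Nat.factorial n : ℝ))⁻¹ • S ^ n) 2).1 ?_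
    have hrange : ∑ i ∈ Finset.range 2, ((Nat.factorial i : ℝ))⁻¹ • S ^ i = 1 + S := by
      simp [Finset.sum_range_succ]
    rw [hrange]
    convert hcomb using 1
    · rfl
    abel
  rw [NormedSpace.exp_eq_tsum ℝ]
  exact hfinal.tsum_eq
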